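/- Let S be a nonempty finite type, let ν be a probability distribution on S, and let X and Y₀, Y₁, Y₂, … be random variables on a common probability space taking values in S such that each Yᵢ has distribution ν and P(X ≠ Yᵢ) ≤ 2^{-i} for every i ∈ ℕ. Then X has distribution ν. -/

import Mathlib

open MeasureTheory
open scoped ENNReal

/-- If `X` and a sequence `Y i` of `S`-valued random variables on a common
probability space are such that each `Y i` has distribution `ν` and
`P(X ≠ Y i) ≤ 2⁻ⁱ` for every `i`, then `X` has distribution `ν`. -/
theorem dist_eq_of_close_couplings {Ω : Type*} [MeasurableSpace Ω]
    (P : Measure Ω) [IsProbabilityMeasure P]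
    {S : Type*} [Fintype S] [Nonempty S] [MeasurableSpace S]
    [MeasurableSingletonClass S]
    (ν : Measure S) [IsProbabilityMeasure ν]
    (X : Ω → S) (Y : ℕ → Ω → S)
    (hX : Measurable X) (hY : ∀ i, Measurable (Y i))
    (hdist : ∀ i, Measure.map (Y i) P = ν)
    (hclose : ∀ i : ℕ, P {ω | X ω ≠ Y i ω} ≤ 2⁻¹ ^ i) :
    Measure.map X P = ν := by
  ext s hs
  rw [Measure.map_apply hX hs]
  have htend : Filter.Tendsto (fun i : ℕ => (2⁻¹ : ℝ≥0∞) ^ i) Filter.atTop (nhds 0) :=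
    ENNReal.tendsto_pow_atTop_nhds_zero_of_lt_one (by norm_num)
  have key : ∀ (f g : Ω → S), Measurable g → ∀ i : ℕ,
      P {ω | f ω ≠ g ω} ≤ 2⁻¹ ^ i → P (f ⁻¹' s) ≤ P (g ⁻¹' s) + 2⁻¹ ^ i := by
    intro f g hg i hfg
    calc P (f ⁻¹' s) ≤ P (g ⁻¹' s ∪ {ω | f ω ≠ g ω}) := by
          apply measure_mono
          intro ω hω
          by_cases h : f ω = g ω
          · left; rwa [Set.mem_preimage, ← h]
          · right; exact h
      _ ≤ P (g ⁻¹' s) + P {ω | f ω ≠ g ω} := measure_union_le _ _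
      _ ≤ P (g ⁻¹' s) + 2⁻¹ ^ i := add_le_add_right hfg _
  have hYs : ∀ i, P (Y i ⁻¹' s) = ν s := by
    intro i; rw [← hdist i, Measure.map_apply (hY i) hs]
  apply le_antisymm
  · have h1 : Filter.Tendsto (fun i : ℕ => ν s + 2⁻¹ ^ i) Filter.atTop (nhds (ν s)) := by
      simpa using (Filter.Tendsto.const_add (ν s) htend)
    refine ge_of_tendsto' h1 (fun i => ?_)
    have := key X (Y i) (hY i) i (hclose i)
    rwa [hYs i] at this
  · have h1 : Filter.Tendsto (fun i : ℕ => P (X ⁻¹' s) + 2⁻¹ ^ i) Filter.atTop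
        (nhds (P (X ⁻¹' s))) := by
      simpa using (Filter.Tendsto.const_add (P (X ⁻¹' s)) htend)
    refine ge_of_tendsto' h1 (fun i => ?_)
    have hsym : P {ω | Y i ω ≠ X ω} ≤ 2⁻¹ ^ i := by
      have h2 : {ω | Y i ω ≠ X ω} = {ω | X ω ≠ Y i ω} := by
        ext ω; exact ne_comm
      rw [h2]; exact hclose i
    have := key (Y i) X hX i hsym
    rwa [hYs i] at this
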